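/- For r-Dyck paths of size n, define iInv(μ) as the number of unit squares between μ and the top path 0^n 1^{rn}. Then ∑_{μ} q^{iInv(μ)} = C_n^{(r)}(q), where C_n^{(r)}(q) satisfies the recurrence C'_n(q) = ∑_{l_0+...+l_r = n-1} C'_{l_0}(q)···C'_{l_r}(q) q^{∑_{j=1}^r j·l_j} after the substitution C_n^{(r)}(q) = q^{r·binom(n,2)} C'_n(q^{-1}). -/

import Mathlib

open Finset Polynomial

open scoped Classical in
/-- An `r`-Dyck path of size `n`: a word with `n` zeros (`false`) and `r*n` ones
(`true`), every prefix having at most `r` times as many ones as zeros. -/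
def IsRDyck (r n : ℕ) (w : Fin ((r + 1) * n) → Bool) : Prop :=
  (univ.filter (fun i => w i = false)).card = n ∧
  ∀ k : ℕ,
    (univ.filter (fun i : Fin ((r + 1) * n) => (i : ℕ) < k ∧ w i = true)).card ≤
      r * (univ.filter (fun i : Fin ((r + 1) * n) => (i : ℕ) < k ∧ w i = false)).card

open scoped Classical in
/-- `iInv(μ)`: the number of unit squares between the path `μ` and the top path
`0^n 1^{rn}`, i.e. the number of pairs of positions `i < j` with `μ_i = 1` and
`μ_j = 0`. -/
def iInv {m : ℕ} (w : Fin m → Bool) : ℕ :=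
  (univ.filter (fun p : Fin m × Fin m => p.1 < p.2 ∧ w p.1 = true ∧ w p.2 = false)).card

/-- The `q`-Fuss–Catalan polynomial `C'_n(q)`, defined by the recurrence
`C'_n(q) = ∑_{l_0+⋯+l_r = n-1} C'_{l_0}(q) ⋯ C'_{l_r}(q) q^{∑_{j=1}^{r} j·l_j}`,
with `C'_0 = 1`. -/
noncomputable def fussCarlitz (r : ℕ) : ℕ → Polynomial ℕ
  | 0 => 1
  | n + 1 =>
    ∑ l ∈ (Finset.Nat.antidiagonalTuple (r + 1) n).attach,
      (∏ i : Fin (r + 1), fussCarlitz r (l.1 i)) *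
        X ^ (∑ i : Fin (r + 1), (i : ℕ) * l.1 i)
  decreasing_by
    have h := Finset.Nat.mem_antidiagonalTuple.mp l.2
    have : l.1 i ≤ n := by
      calc l.1 i ≤ ∑ j, l.1 j := Finset.single_le_sum (fun _ _ => Nat.zero_le _) (mem_univ i)
        _ = n := h
    omega

/-- `revAt D p = q^D · p(q⁻¹)` for a polynomial `p` of degree at most `D`:
the reversal of the coefficient sequence of `p` with respect to degree `D`. -/
noncomputable def revAt (D : ℕ) (p : Polynomial ℕ) : Polynomial ℕ :=
  ∑ i ∈ Finset.range (D + 1), C (p.coeff (D - i)) * X ^ i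

/-! ### Auxiliary development -/

namespace RD

open List
open scoped Classical

/-- Number of inversions (a `true` before a `false`) in a list. -/
def iInvL : List Bool → ℕ
  | [] => 0
  | b :: t => (if b then t.count false else 0) + iInvL t

lemma iInvL_append (u v : List Bool) :
    iInvL (u ++ v) = iInvL u + iInvL v + u.count true * v.count false := by
  induction u with
  | nil => simp [iInvL]
  | cons b t ih =>
    simp only [cons_append, iInvL, ih, count_cons, count_append]
    cases b <;> simp [ih, Nat.succ_mul] <;> ring

lemma count_true_add_count_false (l : List Bool) : l.count true + l.count false = l.length := by
  induction l with
  | nil => simp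
  | cons b t ih => cases b <;> simp [count_cons] <;> omega

/-- The prefix condition of Dyck paths. -/
def PreDyck (r : ℕ) (l : List Bool) : Prop :=
  ∀ q, q <+: l → q.count true ≤ r * q.count false

lemma preDyck_iff_take (r : ℕ) (l : List Bool) :
    PreDyck r l ↔ ∀ k, (l.take k).count true ≤ r * (l.take k).count false := by
  constructor
  · exact fun h k => h _ (take_prefix k l)
  · intro h q hq
    have := List.prefix_iff_eq_take.mp hq
    rw [this]; exact h _

lemma prefix_append_cases {q A B : List Bool} (h : q <+: A ++ B) :
    q <+: A ∨ ∃ q', q' <+: B ∧ q = A ++ q' := by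
  induction A generalizing q with
  | nil => exact Or.inr ⟨q, by simpa using h, by simp⟩
  | cons a A ih =>
    cases q with
    | nil => exact Or.inl nil_prefix
    | cons b q' =>
      rw [cons_append, cons_prefix_cons] at h
      obtain ⟨rfl, h⟩ := h
      rcases ih h with h1 | ⟨q'', h1, rfl⟩
      · exact Or.inl ((cons_prefix_cons).mpr ⟨rfl, h1⟩)
      · exact Or.inr ⟨q'', h1, by simp⟩

/-- `body p k = p (k) ++ true :: p (k-1) ++ true :: ⋯ p 1 ++ true :: p 0`. -/
def body (p : ℕ → List Bool) : ℕ → List Bool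
  | 0 => p 0
  | k + 1 => p (k + 1) ++ true :: body p k

lemma body_congr {p q : ℕ → List Bool} {k : ℕ} (h : ∀ i ≤ k, p i = q i) :
    body p k = body q k := by
  induction k with
  | zero => exact h 0 le_rfl
  | succ k ih =>
    simp only [body, h (k+1) le_rfl, ih (fun i hi => h i (hi.trans (Nat.le_succ k)))]

lemma count_false_body (p : ℕ → List Bool) (k : ℕ) :
    (body p k).count false = ∑ i ∈ range (k+1), (p i).count false := by
  induction k with
  | zero => simp [body]
  | succ k ih => rw [Finset.sum_range_succ]; simp [body, count_append, count_cons, ih]; ring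

lemma count_true_body (p : ℕ → List Bool) (k : ℕ) :
    (body p k).count true = (∑ i ∈ range (k+1), (p i).count true) + k := by
  induction k with
  | zero => simp [body]
  | succ k ih => rw [Finset.sum_range_succ]; simp [body, count_append, count_cons, ih]; ring

lemma iInvL_body (r : ℕ) (p : ℕ → List Bool) (k : ℕ)
    (hb : ∀ i ≤ k, (p i).count true = r * (p i).count false) :
    iInvL (body p k) = (∑ i ∈ range (k+1), iInvL (p i)) +
      ∑ i ∈ range (k+1), (r * (p i).count false + 1) * (∑ j ∈ range i, (p j).count false) := by
  induction k with
  | zero => simp [body]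
  | succ k ih =>
    have ih' := ih (fun i hi => hb i (hi.trans (Nat.le_succ k)))
    rw [Finset.sum_range_succ, Finset.sum_range_succ (fun i => (r * (p i).count false + 1) * _)]
    simp only [body, iInvL_append, iInvL, if_pos, count_cons, ih',
      count_false_body, hb (k+1) le_rfl]
    have : (true :: body p k).count false = (body p k).count false := by simp [count_cons]
    rw [count_false_body] at this
    simp [count_false_body]
    ring

lemma pre_body (r : ℕ) (p : ℕ → List Bool) (k : ℕ)
    (hb : ∀ i ≤ k, (p i).count true = r * (p i).count false)
    (hp : ∀ i ≤ k, PreDyck r (p i)) :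
    ∀ q, q <+: body p k → q.count true ≤ r * q.count false + k := by
  induction k with
  | zero => intro q hq; simpa using hp 0 le_rfl q hq
  | succ k ih =>
    intro q hq
    rcases prefix_append_cases (by simpa [body] using hq) with h | ⟨q', h, rfl⟩
    · have := hp (k+1) le_rfl q h; omega
    · cases q' with
      | nil =>
        have := hp (k+1) le_rfl (p (k+1)) prefix_rfl
        simp only [append_nil]; omega
      | cons b q'' =>
        rw [cons_prefix_cons] at h
        obtain ⟨rfl, h⟩ := h
        have h2 := ih (fun i hi => hb i (hi.trans (Nat.le_succ k)))
          (fun i hi => hp i (hi.trans (Nat.le_succ k))) q'' h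
        have h3 := hb (k+1) le_rfl
        simp only [count_append, count_cons]
        simp [Nat.mul_add]; omega

/-- Uniqueness of the first-return factorisation. -/
lemma dyck_head_eq {r : ℕ} {u v A B : List Bool}
    (hu : u.count true = r * u.count false)
    (hv : v.count true = r * v.count false)
    (hpu : PreDyck r u) (hpv : PreDyck r v)
    (heq : u ++ true :: A = v ++ true :: B) : u = v ∧ A = B := by
  have key : ∀ (u v A B : List Bool), u.count true = r * u.count false →
      PreDyck r v → u <+: v → u ++ true :: A = v ++ true :: B → u = v := by
    intro u v A B hu hpv hpre heq
    obtain ⟨w, rfl⟩ := hpre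
    cases w with
    | nil => simp
    | cons b w' =>
      exfalso
      rw [append_assoc] at heq
      have := append_cancel_left heq
      have hb : b = true := by
        have := congrArg (fun l => l.headI) this
        simpa using this.symm
      subst hb
      have hpref : u ++ [true] <+: u ++ true :: w' := ⟨w', by simp⟩
      have := hpv _ hpref
      simp [count_append, count_cons] at this
      omega
  have h1 : u <+: v ∨ v <+: u := by
    have hu' : u <+: v ++ true :: B := heq ▸ ⟨true :: A, rfl⟩
    have hv' : v <+: v ++ true :: B := ⟨true :: B, rfl⟩
    exact prefix_or_prefix_of_prefix hu' hv'
  have huv : u = v := by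
    rcases h1 with h | h
    · exact key u v A B hu hpv h heq
    · exact (key v u B A hv hpu h heq.symm).symm
  subst huv
  exact ⟨rfl, by simpa using append_cancel_left heq⟩

lemma body_inj (r : ℕ) : ∀ k (p p' : ℕ → List Bool),
    (∀ i ≤ k, (p i).count true = r * (p i).count false ∧ PreDyck r (p i)) →
    (∀ i ≤ k, (p' i).count true = r * (p' i).count false ∧ PreDyck r (p' i)) →
    body p k = body p' k → ∀ i ≤ k, p i = p' i := by
  intro k
  induction k with
  | zero =>
    intro p p' _ _ h i hi
    interval_cases i
    exact h
  | succ k ih =>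
    intro p p' hp hp' h i hi
    simp only [body] at h
    obtain ⟨h1, h2⟩ := dyck_head_eq (hp (k+1) le_rfl).1 (hp' (k+1) le_rfl).1
      (hp (k+1) le_rfl).2 (hp' (k+1) le_rfl).2 h
    by_cases hik : i = k + 1
    · rw [hik]; exact h1
    · exact ih p p' (fun j hj => hp j (hj.trans (Nat.le_succ k)))
        (fun j hj => hp' j (hj.trans (Nat.le_succ k))) h2 i (by omega)

lemma exists_body (r : ℕ) : ∀ k (t : List Bool),
    (∀ q, q <+: t → q.count true ≤ r * q.count false + k) →
    t.count true = r * t.count false + k →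
    ∃ p : ℕ → List Bool,
      (∀ i ≤ k, (p i).count true = r * (p i).count false ∧ PreDyck r (p i)) ∧
      t = body p k := by
  intro k
  induction k with
  | zero =>
    intro t hpre htot
    exact ⟨fun _ => t, fun i _ => ⟨by simpa using htot,
      fun q hq => by simpa using hpre q hq⟩, rfl⟩
  | succ k ih =>
    intro t hpre htot
    classical
    have hex : ∃ j, r * ((t.take j).count false) < (t.take j).count true :=
      ⟨t.length, by rw [take_of_length_le le_rfl]; omega⟩
    set j0 := Nat.find hex with hj0def
    have hj0 : r * ((t.take j0).count false) < (t.take j0).count true := Nat.find_spec hex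
    have hmin : ∀ i, i < j0 → ¬ (r * ((t.take i).count false) < (t.take i).count true) :=
      fun i hi => Nat.find_min hex hi
    have hj0ne : j0 ≠ 0 := by
      intro h; rw [h] at hj0; simp at hj0
    obtain ⟨j', hj'⟩ : ∃ j', j0 = j' + 1 := ⟨j0 - 1, by omega⟩
    have hminP : ∀ i, i ≤ j' → (t.take i).count true ≤ r * ((t.take i).count false) := by
      intro i hi
      have := hmin i (by omega); omega
    have hj'lt : j' < t.length := by
      by_contra h
      have h1 : t.take j' = t := take_of_length_le (by omega)
      have := hminP j' le_rfl
      rw [h1] at this; omega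
    set u := t.take j' with hu
    set c := t[j']'hj'lt with hc
    have htake : t.take (j'+1) = u ++ [c] := by
      rw [take_succ]
      simp [hu, hc, getElem?_eq_getElem hj'lt]
    have hPj0 : r * ((u ++ [c]).count false) < (u ++ [c]).count true := by
      rw [hj', htake] at hj0; exact hj0
    have hub : u.count true ≤ r * u.count false := hminP j' le_rfl
    have hctrue : c = true := by
      cases hcc : c
      · rw [hcc] at hPj0
        simp [count_append, count_cons, Nat.mul_add] at hPj0
        omega
      · rfl
    rw [hctrue] at htake hPj0
    have hubal : u.count true = r * u.count false := by
      simp [count_append, count_cons] at hPj0; omega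
    have hupre : PreDyck r u := by
      intro q hq
      have hql : q.length ≤ j' := by
        have h1 := hq.length_le
        have h2 : u.length = j' := by
          rw [hu, length_take]; omega
        omega
      have hq2 : q <+: t := hq.trans (take_prefix j' t)
      have hqt : q = t.take q.length := List.prefix_iff_eq_take.mp hq2
      rw [hqt]; exact hminP _ hql
    set rest := t.drop (j'+1) with hrest
    have hsplit : t = u ++ true :: rest := by
      conv_lhs => rw [← take_append_drop j' t]
      rw [hrest, drop_eq_getElem_cons hj'lt, ← hc, hctrue]
    have hrpre : ∀ q, q <+: rest → q.count true ≤ r * q.count false + k := by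
      intro q hq
      obtain ⟨w, hw⟩ := hq
      have hq2 : (u ++ true :: q) <+: t := by
        rw [hsplit]; exact ⟨w, by simp [← hw]⟩
      have := hpre _ hq2
      simp only [count_append, count_cons, Nat.mul_add] at this ⊢
      simp at this
      omega
    have hrtot : rest.count true = r * rest.count false + k := by
      have := htot
      rw [hsplit] at this
      simp only [count_append, count_cons, Nat.mul_add] at this
      simp at this
      omega
    obtain ⟨p', hp', hbody⟩ := ih rest hrpre hrtot
    refine ⟨fun i => if i = k + 1 then u else p' i, ?_, ?_⟩
    · intro i hi
      by_cases h : i = k + 1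
      · simp only [h, if_pos rfl]; exact ⟨hubal, hupre⟩
      · simp only [if_neg h]; exact hp' i (by omega)
    · have hb : body (fun i => if i = k + 1 then u else p' i) k = body p' k :=
        body_congr (fun i hi => by simp [Nat.ne_of_lt (by omega : i < k+1)])
      simp only [body, hb, ← hbody, hsplit]
      simp

/-! ### Finsets of Dyck words -/

/-- All lists of booleans of length `m`, as a finset. -/
noncomputable def listsLen (m : ℕ) : Finset (List Bool) :=
  (Finset.univ : Finset (Fin m → Bool)).image List.ofFn

lemma mem_listsLen {m : ℕ} {l : List Bool} : l ∈ listsLen m ↔ l.length = m := by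
  constructor
  · intro h
    obtain ⟨w, -, rfl⟩ := Finset.mem_image.mp h
    simp
  · intro h
    refine Finset.mem_image.mpr ⟨fun i : Fin m => l.getD i false, Finset.mem_univ _, ?_⟩
    apply List.ext_getElem (by simp [h])
    intro k h1 h2
    rw [List.getElem_ofFn]
    rw [List.getD_eq_getElem l false h2]

/-- The finset of `r`-Dyck words of size `s`. -/
noncomputable def dyckF (r s : ℕ) : Finset (List Bool) :=
  (listsLen ((r+1)*s)).filter (fun l => l.count false = s ∧ PreDyck r l)

lemma mem_dyckF {r s : ℕ} {l : List Bool} :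
    l ∈ dyckF r s ↔ l.length = (r+1)*s ∧ l.count false = s ∧ PreDyck r l := by
  simp [dyckF, mem_listsLen, and_assoc]

lemma count_true_of_mem_dyckF {r s : ℕ} {l : List Bool} (h : l ∈ dyckF r s) :
    l.count true = r * l.count false := by
  obtain ⟨h1, h2, -⟩ := mem_dyckF.mp h
  have h3 := count_true_add_count_false l
  have h4 : (r+1) * s = r * s + s := by ring
  rw [h2]; omega

/-! ### Bridging between `Fin`-words and lists -/

lemma card_filter_lt {M : ℕ} (w : Fin M → Bool) (b : Bool) (k : ℕ) :
    (univ.filter fun i : Fin M => (i : ℕ) < k ∧ w i = b).card =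
      (((List.ofFn w).take k).count b) := by
  induction k with
  | zero => simp
  | succ k ih =>
    have hsplit : (univ.filter fun i : Fin M => (i : ℕ) < k + 1 ∧ w i = b) =
        (univ.filter fun i : Fin M => (i : ℕ) < k ∧ w i = b) ∪
        (univ.filter fun i : Fin M => (i : ℕ) = k ∧ w i = b) := by
      ext i
      simp only [Finset.mem_filter, Finset.mem_union, Finset.mem_univ, true_and]
      constructor
      · rintro ⟨h1, h2⟩
        rcases Nat.lt_succ_iff_lt_or_eq.mp h1 with h | h
        · exact Or.inl ⟨h, h2⟩
        · exact Or.inr ⟨h, h2⟩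
      · rintro (⟨h1, h2⟩ | ⟨h1, h2⟩) <;> exact ⟨by omega, h2⟩
    have hdisj : Disjoint (univ.filter fun i : Fin M => (i : ℕ) < k ∧ w i = b)
        (univ.filter fun i : Fin M => (i : ℕ) = k ∧ w i = b) := by
      rw [disjoint_filter]
      rintro i _ ⟨h1, _⟩ ⟨h2, _⟩; omega
    rw [hsplit, card_union_of_disjoint hdisj, ih, take_succ, count_append]
    congr 1
    by_cases hk : k < M
    · have hget : (List.ofFn w)[k]? = some (w ⟨k, hk⟩) := by
        rw [getElem?_eq_getElem (by simpa using hk)]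
        congr 1
        exact List.getElem_ofFn (f := w) (by simpa using hk)
      rw [hget]
      by_cases hb : w ⟨k, hk⟩ = b
      · have : (univ.filter fun i : Fin M => (i : ℕ) = k ∧ w i = b) = {⟨k, hk⟩} := by
          ext i
          simp only [Finset.mem_filter, Finset.mem_univ, true_and, Finset.mem_singleton]
          constructor
          · rintro ⟨h1, _⟩; exact Fin.ext h1
          · rintro rfl; exact ⟨rfl, hb⟩
        simp [this, hb]
      · have : (univ.filter fun i : Fin M => (i : ℕ) = k ∧ w i = b) = ∅ := by
          ext i
          simp only [Finset.mem_filter, Finset.mem_univ, true_and, Finset.notMem_empty,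
            iff_false]
          rintro ⟨h1, h2⟩
          exact hb (by rwa [show (⟨k, hk⟩ : Fin M) = i from Fin.ext h1.symm])
        simp [this, hb, List.count_singleton]
    · have hget : (List.ofFn w)[k]? = none := by
        rw [getElem?_eq_none]; simpa using Nat.le_of_not_lt hk
      have : (univ.filter fun i : Fin M => (i : ℕ) = k ∧ w i = b) = ∅ := by
        ext i
        simp only [Finset.mem_filter, Finset.mem_univ, true_and, Finset.notMem_empty,
          iff_false]
        rintro ⟨h1, _⟩
        exact hk (h1 ▸ i.isLt)
      simp [this, hget]

lemma card_filter_eq_count {M : ℕ} (w : Fin M → Bool) (b : Bool) :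
    (univ.filter fun i : Fin M => w i = b).card = ((List.ofFn w).count b) := by
  have h := card_filter_lt w b M
  rw [take_of_length_le (by simp)] at h
  rw [← h]
  congr 1
  ext i
  simp [i.isLt]

lemma iInv_ofFn {M : ℕ} (w : Fin M → Bool) : iInv w = iInvL (List.ofFn w) := by
  induction M with
  | zero => simp [iInv, iInvL, List.ofFn_zero]
  | succ m ih =>
    set t := fun i : Fin m => w i.succ with ht
    have hofn : List.ofFn w = w 0 :: List.ofFn t := by
      rw [List.ofFn_succ]
    rw [hofn]
    show iInv w = iInvL (w 0 :: List.ofFn t)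
    have hR : iInvL (w 0 :: List.ofFn t) =
        (if w 0 = true then (List.ofFn t).count false else 0) + iInv t := by
      simp only [iInvL, ih]
    rw [hR]
    unfold iInv
    rw [← Finset.card_filter_add_card_filter_not
      (p := fun p : Fin (m+1) × Fin (m+1) => p.1 = 0)]
    congr 1
    · by_cases hw : w 0 = true
      · rw [if_pos hw, ← card_filter_eq_count t false]
        refine (Finset.card_nbij (i := fun j : Fin m => ((0 : Fin (m+1)), j.succ))
          ?_ ?_ ?_).symm
        · intro j hj
          have hj' : t j = false := (Finset.mem_filter.mp hj).2
          exact Finset.mem_filter.mpr ⟨Finset.mem_filter.mpr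
            ⟨Finset.mem_univ _, j.succ_pos, hw, hj'⟩, rfl⟩
        · intro a _ b _ hab
          exact Fin.succ_injective m (congrArg Prod.snd hab)
        · intro p hp
          have hp' := Finset.mem_coe.mp hp
          rw [Finset.mem_filter] at hp'
          obtain ⟨hp'', h0⟩ := hp'
          rw [Finset.mem_filter] at hp''
          obtain ⟨_, h1, _, h3⟩ := hp''
          have hp2 : p.2 ≠ 0 := by
            intro h; rw [h, h0] at h1; exact absurd h1 (lt_irrefl _)
          obtain ⟨j, hj⟩ := Fin.exists_succ_eq.mpr hp2
          refine ⟨j, Finset.mem_coe.mpr (Finset.mem_filter.mpr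
            ⟨Finset.mem_univ _, ?_⟩), ?_⟩
          · show w j.succ = false
            rw [hj]; exact h3
          · show ((0 : Fin (m+1)), j.succ) = p
            rw [Prod.ext_iff]
            exact ⟨h0.symm, hj⟩
      · rw [if_neg hw]
        rw [Finset.card_eq_zero]
        ext p
        simp only [Finset.mem_filter, Finset.mem_univ, true_and, Finset.notMem_empty,
          iff_false]
        rintro ⟨⟨_, h2, _⟩, h0⟩
        rw [h0] at h2
        exact hw h2
    · refine (Finset.card_nbij
        (i := fun q : Fin m × Fin m => (q.1.succ, q.2.succ)) ?_ ?_ ?_).symm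
      · intro q hq
        obtain ⟨h1, h2, h3⟩ := (Finset.mem_filter.mp hq).2
        exact Finset.mem_filter.mpr ⟨Finset.mem_filter.mpr
          ⟨Finset.mem_univ _, Fin.succ_lt_succ_iff.mpr h1, h2, h3⟩, Fin.succ_ne_zero _⟩
      · intro a _ b _ hab
        rw [Prod.ext_iff] at hab ⊢
        exact ⟨Fin.succ_injective m hab.1, Fin.succ_injective m hab.2⟩
      · intro p hp
        have hp' := Finset.mem_coe.mp hp
        rw [Finset.mem_filter] at hp'
        obtain ⟨hp'', h0⟩ := hp'
        rw [Finset.mem_filter] at hp''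
        obtain ⟨_, h1, h2, h3⟩ := hp''
        obtain ⟨i, hi⟩ := Fin.exists_succ_eq.mpr h0
        have hp2 : p.2 ≠ 0 := by
          intro h
          rw [h] at h1
          simp at h1
        obtain ⟨j, hj⟩ := Fin.exists_succ_eq.mpr hp2
        refine ⟨(i, j), Finset.mem_coe.mpr (Finset.mem_filter.mpr
          ⟨Finset.mem_univ _, ?_, ?_, ?_⟩), ?_⟩
        · rw [← Fin.succ_lt_succ_iff, hi, hj]; exact h1
        · show w i.succ = true; rw [hi]; exact h2
        · show w j.succ = false; rw [hj]; exact h3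
        · show (i.succ, j.succ) = p
          rw [Prod.ext_iff]
          exact ⟨hi, hj⟩

lemma isRDyck_iff {r s : ℕ} (w : Fin ((r+1)*s) → Bool) :
    IsRDyck r s w ↔ List.ofFn w ∈ dyckF r s := by
  rw [mem_dyckF, IsRDyck]
  constructor
  · rintro ⟨h1, h2⟩
    refine ⟨by simp, ?_, ?_⟩
    · rw [← card_filter_eq_count]; exact h1
    · rw [preDyck_iff_take]
      intro k
      rw [← card_filter_lt, ← card_filter_lt]
      exact h2 k
  · rintro ⟨h0, h1, h2⟩
    rw [preDyck_iff_take] at h2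
    refine ⟨by rw [card_filter_eq_count]; exact h1, ?_⟩
    intro k
    rw [card_filter_lt, card_filter_lt]
    exact h2 k

open scoped Classical in
lemma sum_bridge (r s : ℕ) :
    (∑ w ∈ univ.filter (fun w : Fin ((r + 1) * s) → Bool => IsRDyck r s w),
      (X : Polynomial ℕ) ^ iInv w) = ∑ l ∈ dyckF r s, (X : Polynomial ℕ) ^ iInvL l := by
  apply Finset.sum_nbij (i := fun w => List.ofFn w)
  · intro w hw
    exact (isRDyck_iff w).mp (Finset.mem_filter.mp hw).2
  · intro a _ b _ hab
    exact List.ofFn_injective hab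
  · intro l hl
    have hl' := Finset.mem_coe.mp hl
    have hlen : l.length = (r+1)*s := (mem_dyckF.mp hl').1
    set w : Fin ((r+1)*s) → Bool := fun i => l.getD i false with hwdef
    have hofn : List.ofFn w = l := by
      apply List.ext_getElem (by simp [hlen])
      intro k h1 h2
      rw [List.getElem_ofFn]
      exact List.getD_eq_getElem l false h2
    refine ⟨w, Finset.mem_coe.mpr (Finset.mem_filter.mpr ⟨Finset.mem_univ _, ?_⟩), hofn⟩
    rw [isRDyck_iff, hofn]
    exact hl'
  · intro w _
    rw [iInv_ofFn]

/-! ### The gluing map and the leading exponents -/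

variable (r : ℕ)

/-- Extension of a `Fin (r+1)`-tuple of lists to `ℕ`. -/
def extP (P : Fin (r+1) → List Bool) : ℕ → List Bool :=
  fun i => if h : i < r+1 then P ⟨i, h⟩ else []

/-- Extension of a `Fin (r+1)`-tuple of numbers to `ℕ`. -/
def mex (m : Fin (r+1) → ℕ) : ℕ → ℕ :=
  fun i => if h : i < r+1 then m ⟨i, h⟩ else 0

@[simp] lemma mex_coe (m : Fin (r+1) → ℕ) (i : Fin (r+1)) : mex r m (i : ℕ) = m i := by
  simp [mex, i.isLt]

@[simp] lemma extP_coe (P : Fin (r+1) → List Bool) (i : Fin (r+1)) :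
    extP r P (i : ℕ) = P i := by
  simp [extP, i.isLt]

/-- The extra exponent produced by gluing. -/
def rawE (m : Fin (r+1) → ℕ) : ℕ :=
  ∑ i ∈ range (r+1), (r * mex r m i + 1) * ∑ j ∈ range i, mex r m j

/-- Gluing a tuple of Dyck words into one Dyck word of one larger size. -/
def glue (P : Fin (r+1) → List Bool) : List Bool :=
  false :: body (extP r P) r

lemma sum_fin_mex (f : ℕ → ℕ → ℕ) (m : Fin (r+1) → ℕ) :
    ∑ i : Fin (r+1), f i (m i) = ∑ i ∈ range (r+1), f i (mex r m i) := by
  rw [← Fin.sum_univ_eq_sum_range (fun i => f i (mex r m i)) (r+1)]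
  exact Finset.sum_congr rfl (fun i _ => by rw [mex_coe])

/-! ### Arithmetic lemmas -/

lemma choose_two_add (a b : ℕ) : (a + b).choose 2 = a.choose 2 + b.choose 2 + a * b := by
  induction b with
  | zero => simp
  | succ b ih =>
    have h1 : (a + b + 1).choose 2 = (a + b).choose 2 + (a + b) := by
      rw [Nat.choose_succ_succ (a+b) 1, Nat.choose_one_right]; ring
    have h2 : (b + 1).choose 2 = b.choose 2 + b := by
      rw [Nat.choose_succ_succ b 1, Nat.choose_one_right]; ring
    have h3 : a + (b + 1) = (a + b) + 1 := by ring
    rw [h3, h1, ih, h2]; ring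

lemma sum_choose_two (m : ℕ → ℕ) (K : ℕ) :
    (∑ i ∈ range K, m i).choose 2 =
      (∑ i ∈ range K, (m i).choose 2) + ∑ i ∈ range K, m i * ∑ j ∈ range i, m j := by
  induction K with
  | zero => simp
  | succ K ih =>
    rw [Finset.sum_range_succ, choose_two_add, ih, Finset.sum_range_succ,
      Finset.sum_range_succ (fun i => m i * ∑ j ∈ range i, m j)]
    ring

lemma sum_S_add_e (m : ℕ → ℕ) (K : ℕ) :
    (∑ i ∈ range (K+1), ∑ j ∈ range i, m j) + (∑ i ∈ range (K+1), i * m i) =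
      K * ∑ i ∈ range (K+1), m i := by
  induction K with
  | zero => simp
  | succ K ih =>
    rw [Finset.sum_range_succ (fun i => ∑ j ∈ range i, m j) (K+1),
      Finset.sum_range_succ (fun i => i * m i) (K+1), Finset.sum_range_succ m (K+1)]
    have h1 : (K+1) * (∑ j ∈ range (K+1), m j + m (K+1)) =
        K * (∑ j ∈ range (K+1), m j) + K * m (K+1) + (∑ j ∈ range (K+1), m j) + m (K+1) := by
      ring
    have h2 : (K+1) * m (K+1) = K * m (K+1) + m (K+1) := by ring
    omega

/-- The key exponent identity. -/
lemma exponent_identity (m : Fin (r+1) → ℕ) (n : ℕ) (hm : ∑ i, m i = n) :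
    (∑ i : Fin (r+1), r * (m i).choose 2) +
      (rawE r m + ∑ i : Fin (r+1), (i : ℕ) * m i) = r * (n+1).choose 2 := by
  have hsum : ∑ i ∈ range (r+1), mex r m i = n := by
    rw [← Fin.sum_univ_eq_sum_range (fun i => mex r m i) (r+1)]
    rw [Finset.sum_congr rfl (fun i _ => mex_coe r m i)]
    exact hm
  set A := ∑ i ∈ range (r+1), (mex r m i).choose 2 with hA
  set B := ∑ i ∈ range (r+1), mex r m i * ∑ j ∈ range i, mex r m j with hB
  set C1 := ∑ i ∈ range (r+1), ∑ j ∈ range i, mex r m j with hC1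
  set E := ∑ i ∈ range (r+1), i * mex r m i with hE
  have h1 : (∑ i : Fin (r+1), r * (m i).choose 2) = r * A := by
    rw [sum_fin_mex r (fun _ x => r * x.choose 2) m, hA, Finset.mul_sum]
  have h2 : (∑ i : Fin (r+1), (i : ℕ) * m i) = E := by
    rw [sum_fin_mex r (fun i x => i * x) m]
  have h3 : rawE r m = r * B + C1 := by
    rw [rawE, hB, hC1, Finset.mul_sum, ← Finset.sum_add_distrib]
    exact Finset.sum_congr rfl (fun i _ => by ring)
  have h4 : n.choose 2 = A + B := by
    rw [← hsum, sum_choose_two]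
  have h5 : C1 + E = r * n := by
    rw [hC1, hE]
    rw [sum_S_add_e (mex r m) r, hsum]
  have h6 : (n+1).choose 2 = n.choose 2 + n := by
    rw [choose_two_add n 1]; simp
  have h7 : r * (n+1).choose 2 = r * n.choose 2 + r * n := by rw [h6, Nat.mul_add]
  have h8 : r * n.choose 2 = r * A + r * B := by rw [h4, Nat.mul_add]
  omega

/-! ### Degree bound -/

lemma fuss_natDegree_le : ∀ n, (fussCarlitz r n).natDegree ≤ r * n.choose 2 := by
  intro n
  induction n using Nat.strong_induction_on with
  | _ n ih =>
    match n with
    | 0 => simp [fussCarlitz]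
    | Nat.succ n =>
      rw [fussCarlitz]
      apply Polynomial.natDegree_sum_le_of_forall_le
      intro l hl
      have hm : ∑ i, l.1 i = n := Finset.Nat.mem_antidiagonalTuple.mp l.2
      have hli : ∀ i : Fin (r+1), l.1 i ≤ n := by
        intro i
        calc l.1 i ≤ ∑ j, l.1 j :=
          Finset.single_le_sum (fun _ _ => Nat.zero_le _) (Finset.mem_univ i)
          _ = n := hm
      have hd1 : (∏ i : Fin (r+1), fussCarlitz r (l.1 i)).natDegree ≤
          ∑ i : Fin (r+1), r * ((l.1 i).choose 2) :=
        (Polynomial.natDegree_prod_le _ _).trans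
          (Finset.sum_le_sum (fun i _ => ih (l.1 i) (by have := hli i; omega)))
      have hd2 : ((X : Polynomial ℕ) ^ (∑ i : Fin (r+1), (i : ℕ) * l.1 i)).natDegree ≤
          ∑ i : Fin (r+1), (i : ℕ) * l.1 i := le_of_eq (Polynomial.natDegree_X_pow _)
      refine (Polynomial.natDegree_mul_le_of_le hd1 hd2).trans ?_
      show _ ≤ r * (n+1).choose 2
      have hkey := exponent_identity r l.1 n hm
      omega

/-! ### The reversal operator -/

lemma revAt_eq_reflect (D : ℕ) (p : Polynomial ℕ) (h : p.natDegree ≤ D) :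
    _root_.revAt D p = p.reflect D := by
  ext j
  rw [_root_.revAt, finset_sum_coeff]
  rw [Polynomial.coeff_reflect]
  by_cases hj : j ≤ D
  · rw [Finset.sum_eq_single j]
    · rw [Polynomial.coeff_C_mul, Polynomial.coeff_X_pow, if_pos rfl, mul_one,
        Polynomial.revAt_le hj]
    · intro i _ hij
      rw [Polynomial.coeff_C_mul, Polynomial.coeff_X_pow, if_neg (Ne.symm hij), mul_zero]
    · intro hjm
      exact absurd (Finset.mem_range.mpr (by omega)) hjm
  · rw [Finset.sum_eq_zero, Polynomial.coeff_eq_zero_of_natDegree_lt]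
    · have h2 : Polynomial.revAt D j = j := Polynomial.revAt_eq_self_of_lt (by omega)
      rw [h2]; omega
    · intro i hi
      rw [Polynomial.coeff_C_mul, Polynomial.coeff_X_pow, if_neg, mul_zero]
      rw [Finset.mem_range] at hi
      omega

lemma reflect_finset_sum {α : Type*} (s : Finset α) (f : α → Polynomial ℕ) (N : ℕ) :
    Polynomial.reflect N (∑ a ∈ s, f a) = ∑ a ∈ s, Polynomial.reflect N (f a) := by
  induction s using Finset.induction_on with
  | empty => simp [Polynomial.reflect_zero]
  | insert a s h ih => rw [Finset.sum_insert h, Finset.sum_insert h, Polynomial.reflect_add, ih]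

lemma reflect_finset_prod {α : Type*} (s : Finset α) (f : α → Polynomial ℕ) (d : α → ℕ)
    (hd : ∀ a ∈ s, (f a).natDegree ≤ d a) :
    Polynomial.reflect (∑ a ∈ s, d a) (∏ a ∈ s, f a) =
      ∏ a ∈ s, Polynomial.reflect (d a) (f a) := by
  induction s using Finset.induction_on with
  | empty => simp
  | @insert a s h ih =>
    rw [Finset.sum_insert h, Finset.prod_insert h, Finset.prod_insert h,
      Polynomial.reflect_mul _ _ (hd a (Finset.mem_insert_self a s))
        ((Polynomial.natDegree_prod_le _ _).trans
          (Finset.sum_le_sum (fun b hb => hd b (Finset.mem_insert_of_mem hb)))),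
      ih (fun b hb => hd b (Finset.mem_insert_of_mem hb))]

/-! ### The main list-level theorem -/

theorem list_main : ∀ n, (∑ l ∈ dyckF r n, (X : Polynomial ℕ) ^ iInvL l) =
    (fussCarlitz r n).reflect (r * n.choose 2) := by
  intro n
  induction n using Nat.strong_induction_on with
  | _ n ih =>
    match n with
    | 0 =>
      have h0 : dyckF r 0 = {([] : List Bool)} := by
        ext l
        rw [mem_dyckF, Finset.mem_singleton]
        constructor
        · rintro ⟨h1, -, -⟩
          simpa using List.length_eq_zero_iff.mp (by simpa using h1)
        · rintro rfl
          exact ⟨by simp, by simp, fun q hq => by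
            simp [List.prefix_nil.mp hq]⟩
      rw [h0, Finset.sum_singleton]
      have h1 : fussCarlitz r 0 = 1 := by rw [fussCarlitz]
      rw [h1]
      have h2 : r * Nat.choose 0 2 = 0 := by simp
      rw [h2]
      have h3 : (1 : Polynomial ℕ) = X ^ 0 := by simp
      rw [h3, Polynomial.reflect_monomial]
      simp [iInvL]
    | Nat.succ n =>
      -- the sigma finset of decompositions
      set Sig := (Finset.Nat.antidiagonalTuple (r+1) n).sigma
        (fun m => Fintype.piFinset (fun i : Fin (r+1) => dyckF r (m i))) with hSig
      -- Step 1: decomposition bijection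
      have hdec : (∑ l ∈ dyckF r (n+1), (X : Polynomial ℕ) ^ iInvL l) =
          ∑ x ∈ Sig, (∏ i : Fin (r+1), (X : Polynomial ℕ) ^ iInvL (x.2 i)) * X ^ rawE r x.1 := by
      -- proved below
        refine (Finset.sum_nbij (i := fun x : (Σ _ : Fin (r+1) → ℕ, Fin (r+1) → List Bool) =>
          glue r x.2) ?_ ?_ ?_ ?_).symm
        · -- maps to
          rintro ⟨m, P⟩ hx
          rw [hSig, Finset.mem_sigma] at hx
          obtain ⟨hm, hP⟩ := hx
          have hm' : ∑ i, m i = n := Finset.Nat.mem_antidiagonalTuple.mp hm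
          have hPi : ∀ i, P i ∈ dyckF r (m i) := Fintype.mem_piFinset.mp hP
          have hcf : ∀ i, (extP r P i).count false = mex r m i := by
            intro i
            by_cases h : i < r+1
            · simp only [extP, mex, dif_pos h]
              exact (mem_dyckF.mp (hPi ⟨i, h⟩)).2.1
            · simp only [extP, mex, dif_neg h]; simp
          have hct : ∀ i ≤ r, (extP r P i).count true = r * (extP r P i).count false := by
            intro i hi
            have h : i < r+1 := by omega
            simp only [extP, dif_pos h]
            exact count_true_of_mem_dyckF (hPi ⟨i, h⟩)
          have hpre : ∀ i ≤ r, PreDyck r (extP r P i) := by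
            intro i hi
            have h : i < r+1 := by omega
            simp only [extP, dif_pos h]
            exact (mem_dyckF.mp (hPi ⟨i, h⟩)).2.2
          have hsum : ∑ i ∈ range (r+1), mex r m i = n := by
            rw [← Fin.sum_univ_eq_sum_range (fun i => mex r m i) (r+1),
              Finset.sum_congr rfl (fun i _ => mex_coe r m i)]
            exact hm'
          have hcfb : (body (extP r P) r).count false = n := by
            rw [count_false_body]
            rw [Finset.sum_congr rfl (fun i _ => hcf i)]
            exact hsum
          have hctb : (body (extP r P) r).count true = r * n + r := by
            rw [count_true_body]
            congr 1
            rw [Finset.sum_congr rfl (fun i hi => hct i (by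
              rw [Finset.mem_range] at hi; omega))]
            rw [Finset.sum_congr rfl (fun i _ => by rw [hcf i]), ← Finset.mul_sum, hsum]
          rw [mem_dyckF]
          refine ⟨?_, ?_, ?_⟩
          · show (false :: body (extP r P) r).length = (r+1)*(n+1)
            have := count_true_add_count_false (body (extP r P) r)
            simp only [List.length_cons]
            have hx : (r+1)*(n+1) = r*n + r + n + 1 := by ring
            omega
          · show (false :: body (extP r P) r).count false = n + 1
            simp [List.count_cons, hcfb]
          · intro q hq
            cases q with
            | nil => simp
            | cons b q' =>
              have hq' : b :: q' <+: false :: body (extP r P) r := hq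
              rw [List.cons_prefix_cons] at hq'
              obtain ⟨rfl, hq'⟩ := hq'
              have hgoal := pre_body r (extP r P) r hct hpre q' hq'
              simp only [List.count_cons, Nat.mul_add]
              simp <;> omega
        · -- injectivity
          rintro ⟨m, P⟩ hx ⟨m', P'⟩ hy hxy
          rw [Finset.mem_coe, hSig, Finset.mem_sigma] at hx hy
          obtain ⟨hm, hP⟩ := hx
          obtain ⟨hm', hP'⟩ := hy
          have hPi : ∀ i, P i ∈ dyckF r (m i) := Fintype.mem_piFinset.mp hP
          have hPi' : ∀ i, P' i ∈ dyckF r (m' i) := Fintype.mem_piFinset.mp hP'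
          have hbody : body (extP r P) r = body (extP r P') r := by
            exact List.tail_eq_of_cons_eq hxy
          have hcond : ∀ i ≤ r, (extP r P i).count true = r * (extP r P i).count false ∧
              PreDyck r (extP r P i) := by
            intro i hi
            have h : i < r+1 := by omega
            simp only [extP, dif_pos h]
            exact ⟨count_true_of_mem_dyckF (hPi ⟨i, h⟩), (mem_dyckF.mp (hPi ⟨i, h⟩)).2.2⟩
          have hcond' : ∀ i ≤ r, (extP r P' i).count true = r * (extP r P' i).count false ∧
              PreDyck r (extP r P' i) := by
            intro i hi
            have h : i < r+1 := by omega
            simp only [extP, dif_pos h]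
            exact ⟨count_true_of_mem_dyckF (hPi' ⟨i, h⟩), (mem_dyckF.mp (hPi' ⟨i, h⟩)).2.2⟩
          have heq := body_inj r r (extP r P) (extP r P') hcond hcond' hbody
          have hPP : P = P' := by
            funext i
            have := heq (i : ℕ) (by omega)
            simpa [extP, i.isLt] using this
          have hmm : m = m' := by
            funext i
            have h1 : (P i).count false = m i := (mem_dyckF.mp (hPi i)).2.1
            have h2 : (P' i).count false = m' i := (mem_dyckF.mp (hPi' i)).2.1
            rw [← h1, ← h2, hPP]
          subst hPP
          subst hmm
          rfl
        · -- surjectivity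
          intro l hl
          have hl' := Finset.mem_coe.mp hl
          obtain ⟨hlen, hcf, hpre⟩ := mem_dyckF.mp hl'
          have hct : l.count true = r * (n+1) := by
            have h1 := count_true_add_count_false l
            have h2 : (r+1)*(n+1) = r * (n+1) + (n+1) := by ring
            omega
          obtain ⟨c, t, rfl⟩ : ∃ c t, l = c :: t := by
            cases l with
            | nil => simp at hlen
            | cons c t => exact ⟨c, t, rfl⟩
          have hcfalse : c = false := by
            cases hc : c
            · rfl
            · exfalso
              have := hpre [c] ⟨t, rfl⟩
              rw [hc] at this
              simp at this
          subst hcfalse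
          have hcft : t.count false = n := by
            simp [List.count_cons] at hcf; omega
          have hctt : t.count true = r * t.count false + r := by
            simp [List.count_cons] at hct
            rw [hcft]
            have : r * (n+1) = r * n + r := by ring
            omega
          have hpret : ∀ q, q <+: t → q.count true ≤ r * q.count false + r := by
            intro q hq
            have h2 : (false :: q) <+: (false :: t) := List.cons_prefix_cons.mpr ⟨rfl, hq⟩
            have h3 := hpre _ h2
            simp only [List.count_cons, Nat.mul_add] at h3
            simp at h3 <;> omega
          obtain ⟨p, hp, hbody⟩ := exists_body r r t hpret hctt
          set m : Fin (r+1) → ℕ := fun i => (p (i : ℕ)).count false with hmdef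
          set P : Fin (r+1) → List Bool := fun i => p (i : ℕ) with hPdef
          have hkey : ∀ i : Fin (r+1), (p (i : ℕ)).count true = r * (p (i : ℕ)).count false ∧
              PreDyck r (p (i : ℕ)) := fun i => hp (i : ℕ) (by omega)
          refine ⟨⟨m, P⟩, ?_, ?_⟩
          · rw [Finset.mem_coe, hSig, Finset.mem_sigma]
            constructor
            · rw [Finset.Nat.mem_antidiagonalTuple]
              have h1 : ∑ i : Fin (r+1), m i = ∑ i ∈ range (r+1), (p i).count false := by
                rw [← Fin.sum_univ_eq_sum_range (fun i => (p i).count false) (r+1)]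
              rw [h1, ← count_false_body, ← hbody, hcft]
            · rw [Fintype.mem_piFinset]
              intro i
              rw [mem_dyckF]
              refine ⟨?_, rfl, (hkey i).2⟩
              have h1 := count_true_add_count_false (p (i : ℕ))
              have h2 := (hkey i).1
              show (p (i : ℕ)).length = (r+1) * (p (i : ℕ)).count false
              have h3 : (r+1) * (p (i : ℕ)).count false =
                  r * (p (i : ℕ)).count false + (p (i : ℕ)).count false := by ring
              omega
          · show glue r P = false :: t
            rw [show glue r P = false :: body (extP r P) r from rfl, hbody]
            congr 1
            apply body_congr
            intro i hi
            have h : i < r+1 := by omega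
            simp only [extP, dif_pos h, hPdef]
        · -- summand equality
          rintro ⟨m, P⟩ hx
          rw [hSig, Finset.mem_sigma] at hx
          obtain ⟨hm, hP⟩ := hx
          have hPi : ∀ i, P i ∈ dyckF r (m i) := Fintype.mem_piFinset.mp hP
          have hcf : ∀ i, (extP r P i).count false = mex r m i := by
            intro i
            by_cases h : i < r+1
            · simp only [extP, mex, dif_pos h]
              exact (mem_dyckF.mp (hPi ⟨i, h⟩)).2.1
            · simp only [extP, mex, dif_neg h]; simp
          have hct : ∀ i ≤ r, (extP r P i).count true = r * (extP r P i).count false := by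
            intro i hi
            have h : i < r+1 := by omega
            simp only [extP, dif_pos h]
            exact count_true_of_mem_dyckF (hPi ⟨i, h⟩)
          have hinv : iInvL (glue r P) =
              (∑ i : Fin (r+1), iInvL (P i)) + rawE r m := by
            show iInvL (false :: body (extP r P) r) = _
            have h1 : iInvL (false :: body (extP r P) r) = iInvL (body (extP r P) r) := by
              simp [iInvL]
            rw [h1, iInvL_body r (extP r P) r hct]
            congr 1
            · rw [← Fin.sum_univ_eq_sum_range (fun i => iInvL (extP r P i)) (r+1)]
              exact Finset.sum_congr rfl (fun i _ => by rw [extP_coe])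
            · rw [rawE]
              refine Finset.sum_congr rfl (fun i hi => ?_)
              rw [hcf i]
              congr 1
              exact Finset.sum_congr rfl (fun j _ => by rw [hcf j])
          rw [hinv, pow_add]
          congr 1
          rw [← Finset.prod_pow_eq_pow_sum]
      rw [hdec, hSig, Finset.sum_sigma]
      -- Step 2: compute the inner sums and match with the recurrence
      have hfuss : fussCarlitz r (n+1) =
          ∑ l ∈ (Finset.Nat.antidiagonalTuple (r + 1) n).attach,
            (∏ i : Fin (r + 1), fussCarlitz r (l.1 i)) *
              X ^ (∑ i : Fin (r + 1), (i : ℕ) * l.1 i) := by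
        rw [fussCarlitz]
      rw [hfuss, reflect_finset_sum, Finset.sum_attach
        (Finset.Nat.antidiagonalTuple (r + 1) n)
        (fun m => Polynomial.reflect (r * (n+1).choose 2)
          ((∏ i : Fin (r + 1), fussCarlitz r (m i)) * X ^ (∑ i : Fin (r + 1), (i : ℕ) * m i)))]
      refine Finset.sum_congr rfl (fun m hm => ?_)
      have hm' : ∑ i, m i = n := Finset.Nat.mem_antidiagonalTuple.mp hm
      have hmi : ∀ i : Fin (r+1), m i ≤ n := by
        intro i
        calc m i ≤ ∑ j, m j :=
          Finset.single_le_sum (fun _ _ => Nat.zero_le _) (Finset.mem_univ i)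
          _ = n := hm'
      -- inner sum over tuples of Dyck words
      have hinner : (∑ P ∈ Fintype.piFinset (fun i : Fin (r+1) => dyckF r (m i)),
          (∏ i : Fin (r+1), (X : Polynomial ℕ) ^ iInvL (P i)) * X ^ rawE r m) =
          (∏ i : Fin (r+1), (fussCarlitz r (m i)).reflect (r * (m i).choose 2)) *
            X ^ rawE r m := by
        rw [← Finset.sum_mul, ← Finset.prod_univ_sum (fun i : Fin (r+1) => dyckF r (m i))
          (fun _ l => (X : Polynomial ℕ) ^ iInvL l)]
        congr 1
        refine Finset.prod_congr rfl (fun i _ => ?_)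
        exact ih (m i) (by have := hmi i; omega)
      rw [hinner]
      -- now match with the reflected term
      have hkey := exponent_identity r m n hm'
      rw [← hkey]
      rw [Polynomial.reflect_mul _ _
        ((Polynomial.natDegree_prod_le _ _).trans
          (Finset.sum_le_sum (fun i _ => fuss_natDegree_le r (m i))))
        ((le_of_eq (Polynomial.natDegree_X_pow _)).trans (Nat.le_add_left _ _))]
      rw [reflect_finset_prod _ _ _ (fun i _ => fuss_natDegree_le r (m i))]
      rw [Polynomial.reflect_monomial,
        Polynomial.revAt_le (by omega : (∑ i : Fin (r+1), (i:ℕ) * m i) ≤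
          rawE r m + ∑ i : Fin (r+1), (i:ℕ) * m i)]
      rw [Nat.add_sub_cancel]

end RD

open scoped Classical in
/-- `∑_{μ ∈ P^r_n} q^{iInv μ} = C_n^{(r)}(q) = q^{r·binom(n,2)} C'_n(q^{-1})`,
where `C'_n` satisfies the recurrence of `fussCarlitz`. -/
theorem iInv_gen_rDyck_eq_fussCarlitz (r n : ℕ) (hr : 1 ≤ r) :
    (∑ w ∈ univ.filter (fun w : Fin ((r + 1) * n) → Bool => IsRDyck r n w),
      (X : Polynomial ℕ) ^ iInv w) = revAt (r * n.choose 2) (fussCarlitz r n) := by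
  rw [RD.sum_bridge, RD.list_main,
    RD.revAt_eq_reflect _ _ (RD.fuss_natDegree_le r n)]
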